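/- A graph in which every vertex has degree at most d is (d+1)-claw-free: every vertex has at most d pairwise non-adjacent neighbors. Consequently, the greedy-by-weight algorithm for maximum weight independent set is a d-approximation on graphs of maximum degree at most d (with d ≥ 1). -/

import Mathlib

/-- Greedy independent set: process the list in order, adding a vertex whenever it is
non-adjacent to all previously added vertices. -/
noncomputable def greedySelect {V : Type*} [DecidableEq V] (adj : V → V → Prop) :
    List V → Finset V → Finset V
  | [], acc => acc
  | v :: rest, acc =>
    haveI := Classical.propDecidable (∀ u ∈ acc, ¬ adj v u)
    if ∀ u ∈ acc, ¬ adj v u then greedySelect adj rest (insert v acc)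
    else greedySelect adj rest acc

lemma greedy_mono {V : Type*} [DecidableEq V] (adj : V → V → Prop) :
    ∀ (l : List V) (acc : Finset V), acc ⊆ greedySelect adj l acc := by
  intro l
  induction l with
  | nil => intro acc; rw [greedySelect]
  | cons a rest ih =>
    intro acc
    rw [greedySelect]
    split
    · exact (Finset.subset_insert a acc).trans (ih _)
    · exact ih _

lemma greedy_indep {V : Type*} [DecidableEq V] (adj : V → V → Prop)
    (hsym : ∀ a b, adj a b → adj b a) (hirr : ∀ a, ¬ adj a a) :
    ∀ (l : List V) (acc : Finset V),
      (∀ u ∈ acc, ∀ v ∈ acc, ¬ adj u v) →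
      ∀ u ∈ greedySelect adj l acc, ∀ v ∈ greedySelect adj l acc, ¬ adj u v := by
  intro l
  induction l with
  | nil => intro acc h; rw [greedySelect]; exact h
  | cons a rest ih =>
    intro acc hacc
    rw [greedySelect]
    by_cases h : ∀ u ∈ acc, ¬ adj a u
    · rw [if_pos h]
      apply ih
      intro u hu v hv
      rcases Finset.mem_insert.mp hu with hu' | hu'
      · rcases Finset.mem_insert.mp hv with hv' | hv'
        · rw [hu', hv']; exact hirr a
        · rw [hu']; exact h v hv'
      · rcases Finset.mem_insert.mp hv with hv' | hv'
        · rw [hv']; exact fun hadj => h u hu' (hsym _ _ hadj)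
        · exact hacc u hu' v hv'
    · rw [if_neg h]; exact ih acc hacc

lemma greedy_block {V : Type*} [DecidableEq V] (adj : V → V → Prop) (w : V → ℝ) :
    ∀ (l : List V) (acc : Finset V),
      l.Pairwise (fun x y => w y ≤ w x) →
      (∀ u ∈ acc, ∀ x ∈ l, w x ≤ w u) →
      ∀ v ∈ l, v ∉ greedySelect adj l acc →
        ∃ g ∈ greedySelect adj l acc, adj v g ∧ w v ≤ w g := by
  intro l
  induction l with
  | nil => intro acc _ _ v hv; exact absurd hv List.not_mem_nil
  | cons a rest ih =>
    intro acc hsort hacc v hv hvout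
    rw [greedySelect] at hvout ⊢
    have hsrest := hsort.of_cons
    have hha : ∀ x ∈ rest, w x ≤ w a := fun x hx => List.rel_of_pairwise_cons hsort hx
    by_cases h : ∀ u ∈ acc, ¬ adj a u
    · rw [if_pos h] at hvout ⊢
      have hacc' : ∀ u ∈ insert a acc, ∀ x ∈ rest, w x ≤ w u := by
        intro u hu x hx
        rcases Finset.mem_insert.mp hu with rfl | hu
        · exact hha x hx
        · exact hacc u hu x (List.mem_cons_of_mem a hx)
      rcases List.mem_cons.mp hv with rfl | hv
      · exact absurd (greedy_mono adj rest _ (Finset.mem_insert_self v acc)) hvout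
      · exact ih _ hsrest hacc' v hv hvout
    · rw [if_neg h] at hvout ⊢
      push_neg at h
      obtain ⟨u, hu, hadj⟩ := h
      rcases List.mem_cons.mp hv with rfl | hv
      · exact ⟨u, greedy_mono adj rest acc hu, hadj,
          hacc u hu v List.mem_cons_self⟩
      · exact ih acc hsrest (fun u hu x hx => hacc u hu x (List.mem_cons_of_mem a hx))
          v hv hvout

theorem bounded_degree_claw_free_and_greedy_approx {V : Type*} [Fintype V] [DecidableEq V]
    (G : SimpleGraph V) [DecidableRel G.Adj]
    (d : ℕ) (hd : 1 ≤ d) (hdeg : ∀ v : V, G.degree v ≤ d)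
    (w : V → ℝ) (hw : ∀ v, 0 ≤ w v)
    (l : List V) (hsort : l.Pairwise fun x y => w y ≤ w x)
    (hnodup : l.Nodup) (hall : ∀ v : V, v ∈ l) :
    (∀ v : V, ∀ S : Finset V,
      (∀ u ∈ S, G.Adj v u) →
      (∀ u ∈ S, ∀ u' ∈ S, u ≠ u' → ¬ G.Adj u u') →
      S.card ≤ d) ∧
    (∀ I : Finset V, (∀ u ∈ I, ∀ v ∈ I, ¬ G.Adj u v) →
      (1 / (d : ℝ)) * ∑ v ∈ I, w v ≤ ∑ v ∈ greedySelect G.Adj l ∅, w v) := by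
  have part1 : ∀ v : V, ∀ S : Finset V,
      (∀ u ∈ S, G.Adj v u) →
      (∀ u ∈ S, ∀ u' ∈ S, u ≠ u' → ¬ G.Adj u u') →
      S.card ≤ d := by
    intro v S hadj _
    calc S.card ≤ (G.neighborFinset v).card :=
          Finset.card_le_card (fun u hu => (G.mem_neighborFinset v u).mpr (hadj u hu))
      _ = G.degree v := G.card_neighborFinset_eq_degree v
      _ ≤ d := hdeg v
  refine ⟨part1, ?_⟩
  intro I hI
  set R := greedySelect G.Adj l ∅ with hR
  have hRind : ∀ u ∈ R, ∀ v ∈ R, ¬ G.Adj u v :=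
    greedy_indep G.Adj (fun a b h => h.symm) G.loopless.irrefl l ∅ (by simp)
  have hblock : ∀ v, v ∉ R → ∃ g ∈ R, G.Adj v g ∧ w v ≤ w g := by
    intro v hv
    exact greedy_block G.Adj w l ∅ hsort (by simp) v (hall v) hv
  classical
  set f : V → V := fun u => if h : u ∈ R then u else (hblock u h).choose with hf
  have hfR : ∀ u, f u ∈ R := by
    intro u
    by_cases h : u ∈ R
    · simpa [hf, h]
    · simp only [hf, dif_neg h]
      exact (hblock u h).choose_spec.1
  have hfw : ∀ u, w u ≤ w (f u) := by
    intro u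
    by_cases h : u ∈ R
    · simp [hf, h]
    · simp only [hf, dif_neg h]
      exact (hblock u h).choose_spec.2.2
  have hfadj : ∀ u, u ∉ R → G.Adj u (f u) := by
    intro u h
    simp only [hf, dif_neg h]
    exact (hblock u h).choose_spec.2.1
  have hfid : ∀ u ∈ R, f u = u := fun u h => by simp [hf, h]
  have hd0 : (0 : ℝ) < d := by exact_mod_cast Nat.lt_of_lt_of_le Nat.zero_lt_one hd
  have hsum : ∑ u ∈ I, w u = ∑ g ∈ R, ∑ u ∈ I.filter (fun u => f u = g), w u :=
    (Finset.sum_fiberwise_of_maps_to (fun u _ => hfR u) w).symm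
  have hfiber : ∀ g ∈ R, ∑ u ∈ I.filter (fun u => f u = g), w u ≤ d * w g := by
    intro g hg
    set F := I.filter (fun u => f u = g) with hF
    have hmemF : ∀ u ∈ F, u ∈ I ∧ f u = g := by
      intro u hu
      exact ⟨(Finset.mem_filter.mp hu).1, (Finset.mem_filter.mp hu).2⟩
    have hcard : F.card ≤ d := by
      by_cases hgI : g ∈ I
      · have hsub : F ⊆ {g} := by
          intro u hu
          obtain ⟨huI, hufg⟩ := hmemF u hu
          by_contra hne
          have hne' : u ≠ g := by simpa using hne
          have huR : u ∉ R := by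
            intro huR
            exact hne' (by rw [← hufg, hfid u huR])
          have : G.Adj u g := hufg ▸ hfadj u huR
          exact hI u huI g hgI this
        calc F.card ≤ ({g} : Finset V).card := Finset.card_le_card hsub
          _ = 1 := Finset.card_singleton g
          _ ≤ d := hd
      · apply part1 g F
        · intro u hu
          obtain ⟨huI, hufg⟩ := hmemF u hu
          have huR : u ∉ R := by
            intro huR
            exact hgI (by rw [← hufg, hfid u huR]; exact huI)
          exact (hufg ▸ hfadj u huR).symm
        · intro u hu u' hu' _
          exact hI u (hmemF u hu).1 u' (hmemF u' hu').1
    calc ∑ u ∈ F, w u ≤ ∑ u ∈ F, w g := by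
          apply Finset.sum_le_sum
          intro u hu
          have := hfw u
          rw [(hmemF u hu).2] at this
          exact this
      _ = F.card * w g := by rw [Finset.sum_const, nsmul_eq_mul]
      _ ≤ d * w g := by
          apply mul_le_mul_of_nonneg_right _ (hw g)
          exact_mod_cast hcard
  have hkey : ∑ u ∈ I, w u ≤ d * ∑ g ∈ R, w g := by
    rw [hsum, Finset.mul_sum]
    exact Finset.sum_le_sum hfiber
  rw [one_div, inv_mul_le_iff₀ hd0]
  exact hkey
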